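/- For each arbitrage rule ω = (i,j,k), the vector f_m = Σ_{1 ≤ p < m} e_{pm} - Σ_{m < p ≤ d} e_{mp} (for each m with 2 ≤ m ≤ d) is a fixed point of B_ω, i.e., B_ω f_m = f_m. -/

import Mathlib

open Matrix

/-- Index type for the coordinates of `ℝ^{d(d-1)/2}`: pairs `(i,j)` with `i < j`. -/
abbrev Pr (d : ℕ) := {p : Fin d × Fin d // p.1 < p.2}

/-- The pair `(i,j)` with `i < j` as an element of `Pr d`. -/
def pr {d : ℕ} {i j : Fin d} (h : i < j) : Pr d := ⟨(i, j), h⟩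

/-- `Eb p q = e_p e_q^T`, the matrix with a single `1` in position `(p,q)`. -/
noncomputable def Eb {d : ℕ} (p q : Pr d) : Matrix (Pr d) (Pr d) ℝ :=
  Matrix.single p q 1

/-- The matrix `B_ω` for the arbitrage rule `ω = (i,j,k)`, `i < j`, `k ≠ i,j`. -/
noncomputable def Bmat {d : ℕ} (i j k : Fin d) (hij : i < j) (hki : k ≠ i) (hkj : k ≠ j) :
    Matrix (Pr d) (Pr d) ℝ :=
  if h1 : k < i then
    -- case k < i < j : B = I - e_{ij}(e_{ij}^T + e_{ki}^T - e_{kj}^T)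
    1 - Eb (pr hij) (pr hij) - Eb (pr hij) (pr h1) + Eb (pr hij) (pr (h1.trans hij))
  else if h2 : k < j then
    -- case i < k < j : B = I - e_{ij}(e_{ij}^T - e_{ik}^T - e_{kj}^T)
    1 - Eb (pr hij) (pr hij) + Eb (pr hij) (pr (lt_of_le_of_ne (not_lt.1 h1) (Ne.symm hki)))
      + Eb (pr hij) (pr h2)
  else
    -- case i < j < k : B = I - e_{ij}(e_{ij}^T - e_{ik}^T + e_{jk}^T)
    1 - Eb (pr hij) (pr hij)
      + Eb (pr hij) (pr (hij.trans (lt_of_le_of_ne (not_lt.1 h2) (Ne.symm hkj))))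
      - Eb (pr hij) (pr (lt_of_le_of_ne (not_lt.1 h2) (Ne.symm hkj)))

/-- The vector `f_m = Σ_{p<m} e_{pm} - Σ_{m<p} e_{mp}`, written coordinatewise: its
`(a,b)`-coordinate is `1` if `b = m`, `-1` if `a = m`, and `0` otherwise. -/
def fvec {d : ℕ} (m : Fin d) : Pr d → ℝ :=
  fun q => (if q.1.2 = m then (1 : ℝ) else 0) - (if q.1.1 = m then (1 : ℝ) else 0)


lemma Eb_mulVec {d : ℕ} (p q : Pr d) (v : Pr d → ℝ) (r : Pr d) :
    (Eb p q).mulVec v r = if p = r then v q else 0 := by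
  simp [Eb, Matrix.mulVec, dotProduct, Matrix.single, ite_and, Finset.sum_ite_eq,
    boole_mul]

theorem fvec_fixed (d : ℕ) (hd : 3 ≤ d) (m : Fin d) (hm : 1 ≤ (m : ℕ))
    (i j k : Fin d) (hij : i < j) (hki : k ≠ i) (hkj : k ≠ j) :
    (Bmat i j k hij hki hkj).mulVec (fvec m) = fvec m := by
  unfold Bmat
  split_ifs with h1 h2 <;> funext r <;>
    simp only [Matrix.sub_mulVec, Matrix.add_mulVec, Matrix.one_mulVec, Eb_mulVec,
      Pi.sub_apply, Pi.add_apply] <;>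
    split_ifs with h <;> subst_vars <;>
    simp [fvec, pr] <;> (by_cases k = m <;> by_cases i = m <;> by_cases j = m <;> simp_all)
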